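/- Consecutive cubic pieces sew continuously: c_i(i+1/2) = c_{i+1}(i+1/2) for all i ≥ 2. -/
import Mathlib

/-- `p i` is the `i`-th prime: `p 1 = 2`, `p 2 = 3`, ... -/
noncomputable def p (i : ℕ) : ℝ := (Nat.nth Nat.Prime (i - 1) : ℝ)

/-- Coefficient `a_i = p(i+1) - p(i-1))/2 - 1` for the cubic spline. -/
noncomputable def acub (i : ℕ) : ℝ := (p (i+1) - p (i-1)) / 2 - 1

/-- Coefficient `b_i = p(i+1) - p(i) - 1`. -/
noncomputable def bcub (i : ℕ) : ℝ := p (i+1) - p i - 1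

/-- The cubic piece `c_i`. -/
noncomputable def c (i : ℕ) (x : ℝ) : ℝ :=
  2 * (acub i * (x - i - 1/2)^2 + bcub i * (x - i - 1/2) + (p i + p (i+1)) / 2) * (x - i)
    - 2 * p i * (x - i - 1/2)

theorem cubic_sewing_continuous (i : ℕ) (hi : 2 ≤ i) :
    c i ((i : ℝ) + 1/2) = c (i+1) ((i : ℝ) + 1/2) := by
  simp only [c, acub, bcub, Nat.add_sub_cancel]
  push_cast
  ring
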